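/- Let D and Θ be measurable spaces, let η ≥ 0, and let μ be a Markov kernel from D to Θ such that for all z, z' ∈ D and every measurable set E ⊆ Θ, (μ(z))(E) ≤ (μ(z'))(E) + η. Then for every probability measure P on D, every jointly measurable ℓ : D × Θ → [0,1], and every z ∈ D, the counterfactual memorization of z is bounded: ∫_Θ ℓ(z,θ) d(μ(z))(θ) − ∫_D ∫_Θ ℓ(z,θ) d(μ(z'))(θ) dP(z') ≤ η. -/

import Mathlib

open MeasureTheory ProbabilityTheory Set

/-- Proposition in Appendix E: `η`-TV privacy (replace-one) bounds counterfactual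
memorization by `η`. -/
theorem stmt_16 {D Θ : Type*} [MeasurableSpace D] [MeasurableSpace Θ]
    (η : ℝ) (hη : 0 ≤ η)
    (μ : Kernel D Θ) [IsMarkovKernel μ]
    (hTV : ∀ z z' : D, ∀ E : Set Θ, MeasurableSet E →
      (μ z) E ≤ (μ z') E + ENNReal.ofReal η)
    (P : Measure D) [IsProbabilityMeasure P]
    (ℓ : D → Θ → ℝ) (hℓ : Measurable (Function.uncurry ℓ))
    (hℓ01 : ∀ z θ, ℓ z θ ∈ Set.Icc (0:ℝ) 1) (z : D) :
    (∫ θ, ℓ z θ ∂(μ z)) - (∫ z', ∫ θ, ℓ z θ ∂(μ z') ∂P) ≤ η := by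
  have hfm : Measurable (ℓ z) := hℓ.of_uncurry_left
  have hnn : ∀ θ, 0 ≤ ℓ z θ := fun θ => (hℓ01 z θ).1
  have hle1 : ∀ θ, ℓ z θ ≤ 1 := fun θ => (hℓ01 z θ).2
  have hint : ∀ w : D, Integrable (ℓ z) (μ w) := fun w =>
    (integrable_const 1).mono' hfm.aestronglyMeasurable
      (Filter.Eventually.of_forall fun θ => by
        rw [Real.norm_eq_abs, abs_of_nonneg (hnn θ)]; exact hle1 θ)
  -- layer cake representation
  set g : Measure Θ → ℝ → ℝ := fun ν t => (ν {a | t < ℓ z a}).toReal with hg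
  have hSmeas : ∀ t : ℝ, MeasurableSet {a | t < ℓ z a} := fun t =>
    measurableSet_lt measurable_const hfm
  have hgmeas : ∀ ν : Measure Θ, Measurable (g ν) := fun ν => by
    refine Measurable.ennreal_toReal ?_
    exact Antitone.measurable (fun _ _ hst => measure_mono (fun _ h => lt_of_le_of_lt hst h))
  have hgint : ∀ ν : Measure Θ, IsProbabilityMeasure ν → ∀ s : Set ℝ,
      volume s < ⊤ → IntegrableOn (g ν) s := fun ν hν s hs => by
    refine Integrable.mono' (g := fun _ => (1:ℝ))
      (integrableOn_const hs.ne) ((hgmeas ν).aestronglyMeasurable)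
      (Filter.Eventually.of_forall fun t => ?_)
    show ‖(ν _).toReal‖ ≤ (1:ℝ)
    rw [Real.norm_eq_abs, abs_of_nonneg ENNReal.toReal_nonneg]
    exact ENNReal.toReal_le_of_le_ofReal zero_le_one (by simpa using prob_le_one)
  have hrep : ∀ w : D, ∫ θ, ℓ z θ ∂(μ w) = ∫ t in Ioc (0:ℝ) 1, g (μ w) t := by
    intro w
    rw [(hint w).integral_eq_integral_meas_lt (Filter.Eventually.of_forall hnn)]
    change ∫ t in Ioi (0:ℝ), g (μ w) t = _
    have hsplit : (Ioi (0:ℝ)) = Ioc 0 1 ∪ Ioi 1 := by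
      ext t; simp [Ioc, Ioi, mem_union]; constructor
      · intro h; by_cases h1 : t ≤ 1 <;> [exact Or.inl ⟨h, h1⟩; exact Or.inr (lt_of_not_ge h1)]
      · rintro (⟨h, _⟩ | h); exact h; linarith
    have hdisj : Disjoint (Ioc (0:ℝ) 1) (Ioi 1) := by
      rw [disjoint_left]; intro a h1 h2; exact absurd h1.2 (not_le.2 h2)
    have hzero : ∀ t ∈ Ioi (1:ℝ), g (μ w) t = 0 := by
      intro t ht
      have : {a | t < ℓ z a} = ∅ := by
        ext a; simp only [mem_setOf_eq, mem_empty_iff_false, iff_false, not_lt]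
        exact (hle1 a).trans (le_of_lt ht)
      simp [g, this]
    rw [hsplit, setIntegral_union hdisj
      measurableSet_Ioi (hgint (μ w) inferInstance _ (by simp))
      ((integrableOn_congr_fun hzero measurableSet_Ioi).2 (integrableOn_zero)),
      setIntegral_congr_fun measurableSet_Ioi hzero]
    simp
  -- pairwise bound
  have key : ∀ w : D, ∫ θ, ℓ z θ ∂(μ z) ≤ ∫ θ, ℓ z θ ∂(μ w) + η := by
    intro w
    rw [hrep z, hrep w]
    have hmono : ∀ t ∈ Ioc (0:ℝ) 1, g (μ z) t ≤ g (μ w) t + η := by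
      intro t _
      have h1 := hTV z w _ (hSmeas t)
      have h2 : ((μ w) {a | t < ℓ z a} + ENNReal.ofReal η).toReal
          = g (μ w) t + η := by
        rw [ENNReal.toReal_add (measure_ne_top _ _) ENNReal.ofReal_ne_top,
          ENNReal.toReal_ofReal hη]
      calc g (μ z) t ≤ ((μ w) {a | t < ℓ z a} + ENNReal.ofReal η).toReal :=
            ENNReal.toReal_mono (by finiteness) h1
        _ = g (μ w) t + η := h2
    calc ∫ t in Ioc (0:ℝ) 1, g (μ z) t ≤ ∫ t in Ioc (0:ℝ) 1, (g (μ w) t + η) :=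
          setIntegral_mono_on (hgint (μ z) inferInstance _ (by simp))
            ((hgint (μ w) inferInstance _ (by simp)).add
              (integrableOn_const (μ := volume) (s := Ioc (0:ℝ) 1) (C := η) (by simp)))
            measurableSet_Ioc hmono
      _ = (∫ t in Ioc (0:ℝ) 1, g (μ w) t) + η := by
          rw [integral_add (hgint (μ w) inferInstance _ (by simp))
            (integrableOn_const (μ := volume) (s := Ioc (0:ℝ) 1) (C := η) (by simp))]
          simp [Real.volume_Ioc]
  -- integrate the bound over P
  have hmeas_inner : StronglyMeasurable fun w : D => ∫ θ, ℓ z θ ∂(μ w) := by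
    have : StronglyMeasurable (Function.uncurry fun (_ : D) (θ : Θ) => ℓ z θ) :=
      (hfm.comp measurable_snd).stronglyMeasurable
    exact this.integral_kernel_prod_right'
  have hint_inner : Integrable (fun w : D => ∫ θ, ℓ z θ ∂(μ w)) P := by
    refine (integrable_const 1).mono' hmeas_inner.aestronglyMeasurable
      (Filter.Eventually.of_forall fun w => ?_)
    rw [Real.norm_eq_abs, abs_of_nonneg (integral_nonneg hnn)]
    calc ∫ θ, ℓ z θ ∂(μ w) ≤ ∫ _θ, (1:ℝ) ∂(μ w) := integral_mono (hint w)
          (integrable_const 1) hle1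
      _ = 1 := by simp
  have hlower : (∫ θ, ℓ z θ ∂(μ z)) - η ≤ ∫ z', ∫ θ, ℓ z θ ∂(μ z') ∂P := by
    calc (∫ θ, ℓ z θ ∂(μ z)) - η
        = ∫ _z', ((∫ θ, ℓ z θ ∂(μ z)) - η) ∂P := by simp
      _ ≤ ∫ z', ∫ θ, ℓ z θ ∂(μ z') ∂P :=
          integral_mono (integrable_const _) hint_inner
            (fun w => by have := key w; linarith)
  linarith
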